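/- arXiv:math/0310292 — 3 statements merged into one kernel-verified Lean document; each statement's English description precedes it below -/
import Mathlib

section
/- Let (X, 𝒰) be a Hausdorff uniform space whose uniformity 𝒰 is generated by an associated family of pseudometrics {d_i : i ∈ I}, and let T : X → X be a T-orbitally continuous self-map such that X is T-orbitally complete. Assume that for real numbers b_i, c_i with 0 < b_i + c_i < 1, for all i ∈ I and all x, y ∈ X: min{ d_i(Tx,Ty), d_i(x,Tx), d_i(y,Ty) } − min{ d_i(x,Ty), d_i(y,Tx) } ≤ b_i·d_i(x,Tx) + c_i·d_i(x,y). Then for each x ∈ X the sequence of iterates {T^n x} converges to a fixed point of T. -/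
open Filter Set
open Topology

/-- Auxiliary: if after every positive term the sequence can only return with a
factor-`k` loss (with zeros in between), then tail sums after a positive term
are bounded geometrically. -/
private lemma tail_sum_le_aux (s : ℕ → ℝ) (k : ℝ) (hk0 : 0 ≤ k) (hk1 : k < 1)
    (hs : ∀ n, 0 ≤ s n)
    (chain : ∀ n p, 0 < s n → (∀ j, j < p → s (n+1+j) = 0) → s (n+1+p) ≤ k * s n) :
    ∀ L n, 0 < s n → (∑ j ∈ Finset.range L, s (n+1+j)) ≤ (k/(1-k)) * s n := by
  have h1k : (0:ℝ) < 1 - k := by linarith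
  have hkk : 0 ≤ k / (1 - k) := div_nonneg hk0 h1k.le
  intro L
  induction L using Nat.strong_induction_on with
  | _ L IH =>
    intro n hn
    by_cases hz : ∀ j, j < L → s (n+1+j) = 0
    · rw [Finset.sum_eq_zero (fun j hj => hz j (Finset.mem_range.mp hj))]
      exact mul_nonneg hkk hn.le
    · push_neg at hz
      classical
      have hex : ∃ j, j < L ∧ s (n+1+j) ≠ 0 := hz
      set p := Nat.find hex with hp_def
      obtain ⟨hpL, hp⟩ : p < L ∧ s (n+1+p) ≠ 0 := Nat.find_spec hex
      have hmin : ∀ j, j < p → s (n+1+j) = 0 := by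
        intro j hj
        by_contra hcon
        have : p ≤ j := Nat.find_le ⟨by omega, hcon⟩
        omega
      have hsp : 0 < s (n+1+p) := (hs _).lt_of_ne (Ne.symm hp)
      have hstep : s (n+1+p) ≤ k * s n := chain n p hn hmin
      have hLsplit : L = (p+1) + (L - (p+1)) := by omega
      rw [hLsplit, Finset.sum_range_add]
      have h1 : ∑ j ∈ Finset.range (p+1), s (n+1+j) = s (n+1+p) := by
        rw [Finset.sum_range_succ,
          Finset.sum_eq_zero (fun j hj => hmin j (Finset.mem_range.mp hj)), zero_add]
      have h2 : (∑ j ∈ Finset.range (L-(p+1)), s (n+1+((p+1)+j)))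
          ≤ (k/(1-k)) * s (n+1+p) := by
        have hidx : ∀ j, n+1+((p+1)+j) = (n+1+p)+1+j := by intro j; omega
        simp only [hidx]
        exact IH (L-(p+1)) (by omega) (n+1+p) hsp
      rw [h1]
      have hfin : s (n+1+p) + (k/(1-k)) * s (n+1+p) ≤ (k/(1-k)) * s n := by
        have e : s (n+1+p) + (k/(1-k)) * s (n+1+p) = (1/(1-k)) * s (n+1+p) := by
          field_simp
          ring
        rw [e]
        have h3 : (1/(1-k)) * s (n+1+p) ≤ (1/(1-k)) * (k * s n) := by
          apply mul_le_mul_of_nonneg_left hstep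
          positivity
        calc (1/(1-k)) * s (n+1+p) ≤ (1/(1-k)) * (k * s n) := h3
          _ = (k/(1-k)) * s n := by field_simp
      linarith [h2]

/-- Auxiliary: summability from the chain condition. -/
private lemma summable_of_chain_aux (s : ℕ → ℝ) (k : ℝ) (hk0 : 0 ≤ k) (hk1 : k < 1)
    (hs : ∀ n, 0 ≤ s n)
    (chain : ∀ n p, 0 < s n → (∀ j, j < p → s (n+1+j) = 0) → s (n+1+p) ≤ k * s n) :
    Summable s := by
  classical
  by_cases hall : ∀ n, s n = 0
  · exact (summable_zero.congr (fun n => (hall n).symm))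
  · push_neg at hall
    haveI : DecidablePred fun n => s n ≠ 0 := fun _ => Classical.dec _
    set N := Nat.find hall with hN_def
    have hN : s N ≠ 0 := Nat.find_spec hall
    have hNmin : ∀ j, j < N → s j = 0 := fun j hj => by
      by_contra hcon
      have h2 : Nat.find hall ≤ j := Nat.find_le hcon
      omega
    have hNpos : 0 < s N := (hs N).lt_of_ne (Ne.symm hN)
    apply summable_of_sum_range_le (c := s N * (1 + k/(1-k))) hs
    intro m
    have hkk : 0 ≤ k / (1 - k) := div_nonneg hk0 (by linarith)
    rcases le_or_gt m N with h | h
    · rw [Finset.sum_eq_zero (fun j hj => hNmin j (by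
        have := Finset.mem_range.mp hj; omega))]
      positivity
    · have hm : m = (N+1) + (m - (N+1)) := by omega
      rw [hm, Finset.sum_range_add]
      have h1 : ∑ j ∈ Finset.range (N+1), s j = s N := by
        rw [Finset.sum_range_succ, Finset.sum_eq_zero
          (fun j hj => hNmin j (Finset.mem_range.mp hj)), zero_add]
      have h2 : (∑ j ∈ Finset.range (m-(N+1)), s ((N+1)+j)) ≤ (k/(1-k)) * s N := by
        have hidx : ∀ j, (N+1)+j = N+1+j := fun j => rfl
        exact tail_sum_le_aux s k hk0 hk1 hs chain (m-(N+1)) N hNpos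
      rw [h1]
      nlinarith [hs N]

/-- **Corollary 4.** For an orbitally continuous self-map `T` of a `T`-orbitally
complete Hausdorff uniform space satisfying the condition with `a i = -1`, the
sequence of iterates `{T^n x}` converges to a fixed point of `T` for each `x`. -/
theorem iterates_converge_to_fixed_point
    {X I : Type*} [UniformSpace X] [T2Space X]
    (d : I → X → X → ℝ)
    (hrefl : ∀ i x, d i x x = 0)
    (hsymm : ∀ i x y, d i x y = d i y x)
    (htri : ∀ i x y z, d i x z ≤ d i x y + d i y z)
    -- the uniformity of `X` is generated by the sub-base `V(i, ε)`:
    (hgen : uniformity X = ⨅ (i : I), ⨅ (ε : ℝ), ⨅ (_ : 0 < ε),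
      𝓟 {p : X × X | d i p.1 p.2 < ε})
    (T : X → X)
    -- `T` is orbitally continuous:
    (hTcont : ∀ (x u : X) (n : ℕ → ℕ), StrictMono n →
      Tendsto (fun j => T^[n j] x) Filter.atTop (nhds u) →
      Tendsto (fun j => T (T^[n j] x)) Filter.atTop (nhds (T u)))
    -- `X` is `T`-orbitally complete: every Cauchy filter finer than the filter of
    -- tails of an orbit of `T` converges:
    (horb : ∀ x : X, ∀ l : Filter X, Cauchy l →
      l ≤ Filter.map (fun n => T^[n] x) Filter.atTop → ∃ z : X, l ≤ nhds z)
    (b c : I → ℝ)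
    (hbc : ∀ i, 0 < b i + c i ∧ b i + c i < 1)
    (hcontr : ∀ i : I, ∀ x y : X,
      min (min (d i (T x) (T y)) (d i x (T x))) (d i y (T y))
        - min (d i x (T y)) (d i y (T x))
      ≤ b i * d i x (T x) + c i * d i x y) :
    ∀ x : X, ∃ z : X, T z = z ∧
      Tendsto (fun n => T^[n] x) Filter.atTop (nhds z) := by
  intro x
  have hd0 : ∀ i u v, 0 ≤ d i u v := by
    intro i u v
    have h := htri i u v u
    rw [hrefl i u, hsymm i v u] at h
    linarith
  set F := Filter.map (fun n => T^[n] x) Filter.atTop with hF_def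
  have cauchyF : Cauchy F := by
    refine ⟨Filter.map_neBot, ?_⟩
    rw [hgen]
    refine le_iInf fun i => le_iInf fun ε => le_iInf fun hε =>
      Filter.le_principal_iff.mpr ?_
    -- per-pseudometric estimates along the orbit
    set s : ℕ → ℝ := fun n => d i (T^[n] x) (T^[n+1] x) with hs_def
    set k : ℝ := b i + c i with hk_def
    obtain ⟨hk0, hk1⟩ := hbc i
    have hsnn : ∀ n, 0 ≤ s n := fun n => hd0 _ _ _
    have dsum : ∀ a L, d i (T^[a] x) (T^[a+L] x) ≤ ∑ j ∈ Finset.range L, s (a+j) := by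
      intro a L
      induction L with
      | zero => simp [hrefl]
      | succ L ih =>
        calc d i (T^[a] x) (T^[a+(L+1)] x)
            ≤ d i (T^[a] x) (T^[a+L] x) + d i (T^[a+L] x) (T^[a+L+1] x) :=
              htri i _ _ _
          _ ≤ (∑ j ∈ Finset.range L, s (a+j)) + s (a+L) := add_le_add ih le_rfl
          _ = ∑ j ∈ Finset.range (L+1), s (a+j) := (Finset.sum_range_succ _ _).symm
    have key : ∀ n m, d i (T^[m] x) (T^[n+1] x) = 0 → min (s n) (s m) ≤ k * s n := by
      intro n m h0
      have hc := hcontr i (T^[n] x) (T^[m] x)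
      rw [← Function.iterate_succ_apply' T n x, ← Function.iterate_succ_apply' T m x] at hc
      have heq : d i (T^[n] x) (T^[m] x) = s n := by
        apply le_antisymm
        · calc d i (T^[n] x) (T^[m] x)
              ≤ d i (T^[n] x) (T^[n+1] x) + d i (T^[n+1] x) (T^[m] x) := htri i _ _ _
            _ = s n := by rw [hsymm i (T^[n+1] x) (T^[m] x), h0, add_zero]
        · calc s n = d i (T^[n] x) (T^[n+1] x) := rfl
            _ ≤ d i (T^[n] x) (T^[m] x) + d i (T^[m] x) (T^[n+1] x) := htri i _ _ _
            _ = d i (T^[n] x) (T^[m] x) := by rw [h0, add_zero]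
      have hge : s m ≤ d i (T^[n+1] x) (T^[m+1] x) := by
        calc s m = d i (T^[m] x) (T^[m+1] x) := rfl
          _ ≤ d i (T^[m] x) (T^[n+1] x) + d i (T^[n+1] x) (T^[m+1] x) := htri i _ _ _
          _ = d i (T^[n+1] x) (T^[m+1] x) := by rw [h0, zero_add]
      have hmin2 : min (d i (T^[n] x) (T^[m+1] x)) (d i (T^[m] x) (T^[n+1] x)) = 0 := by
        rw [h0]
        exact min_eq_right (hd0 _ _ _)
      have hmin1 : min (s n) (s m)
          ≤ min (min (d i (T^[n+1] x) (T^[m+1] x)) (s n)) (s m) :=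
        le_min (le_min (le_trans (min_le_right _ _) hge) (min_le_left _ _))
          (min_le_right _ _)
      rw [heq, hmin2] at hc
      have : min (s n) (s m) ≤ b i * s n + c i * s n := by
        calc min (s n) (s m) ≤ min (min (d i (T^[n+1] x) (T^[m+1] x)) (s n)) (s m) := hmin1
          _ ≤ b i * s n + c i * s n := by linarith [hc]
      calc min (s n) (s m) ≤ b i * s n + c i * s n := this
        _ = k * s n := by rw [hk_def]; ring
    have chain : ∀ n p, 0 < s n → (∀ j, j < p → s (n+1+j) = 0) → s (n+1+p) ≤ k * s n := by
      intro n p hn hz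
      have h0 : d i (T^[n+1+p] x) (T^[n+1] x) = 0 := by
        have h1 := dsum (n+1) p
        rw [Finset.sum_eq_zero (fun j hj => hz j (Finset.mem_range.mp hj))] at h1
        have h2 := hd0 i (T^[n+1] x) (T^[n+1+p] x)
        rw [hsymm i (T^[n+1+p] x) (T^[n+1] x)]
        linarith
      have hk := key n (n+1+p) h0
      rcases le_total (s n) (s (n+1+p)) with h | h
      · rw [min_eq_left h] at hk
        nlinarith
      · rwa [min_eq_right h] at hk
    have hsum : Summable s := summable_of_chain_aux s k hk0.le hk1 hsnn chain
    have htail : Tendsto (fun N => ∑' j, s (j + N)) atTop (𝓝 0) := tendsto_sum_nat_add s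
    obtain ⟨N, hN⟩ : ∃ N, (∑' j, s (j + N)) < ε := (htail.eventually (gt_mem_nhds hε)).exists
    have hfar : ∀ p q, N ≤ p → p ≤ q → d i (T^[p] x) (T^[q] x) < ε := by
      intro p q hNp hpq
      have h1 : d i (T^[p] x) (T^[q] x) ≤ ∑ j ∈ Finset.range (q-p), s (p+j) := by
        have := dsum p (q-p)
        rwa [show p + (q-p) = q by omega] at this
      have hsum' : Summable (fun j => s (j + N)) := (summable_nat_add_iff N).mpr hsum
      have hEq : (∑ j ∈ Finset.range (q-p), s (p+j))
          = ∑ j ∈ Finset.Ico (p-N) (q-N), s (j + N) := by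
        rw [Finset.sum_Ico_eq_sum_range]
        rw [show (q-N)-(p-N) = q-p by omega]
        apply Finset.sum_congr rfl
        intro j _
        congr 1
        omega
      have h2 : (∑ j ∈ Finset.Ico (p-N) (q-N), s (j + N)) ≤ ∑' j, s (j + N) :=
        Summable.sum_le_tsum _ (fun j _ => hsnn _) hsum'
      rw [hEq] at h1
      linarith
    refine Filter.mem_prod_iff.mpr ⟨(fun n => T^[n] x) '' Set.Ici N,
      Filter.image_mem_map (Filter.Ici_mem_atTop N),
      (fun n => T^[n] x) '' Set.Ici N,
      Filter.image_mem_map (Filter.Ici_mem_atTop N), ?_⟩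
    rintro ⟨u, v⟩ ⟨⟨p, hp, rfl⟩, ⟨q, hq, rfl⟩⟩
    simp only [Set.mem_setOf_eq]
    rcases le_total p q with h | h
    · exact hfar p q hp h
    · rw [hsymm]
      exact hfar q p hq h
  obtain ⟨z, hz⟩ := horb x F cauchyF le_rfl
  have hzt : Tendsto (fun n => T^[n] x) atTop (𝓝 z) := hz
  refine ⟨z, ?_, hzt⟩
  have h1 : Tendsto (fun j => T (T^[j] x)) atTop (𝓝 (T z)) :=
    hTcont x z id strictMono_id hzt
  have h2 : Tendsto (fun j => T (T^[j] x)) atTop (𝓝 z) := by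
    have h3 : Tendsto (fun j : ℕ => T^[j+1] x) atTop (𝓝 z) :=
      hzt.comp (Filter.tendsto_add_atTop_nat 1)
    simpa [Function.iterate_succ_apply'] using h3
  exact tendsto_nhds_unique h1 h2
end

section
/- Let X be a set with a family of pseudometrics {d_i : i ∈ I}, let F : X → 2^X be a multivalued mapping with values in the nonempty closed p*-bounded subsets of X, and suppose the contraction condition of Theorem 1 holds: for some integer r ≥ 1 and real numbers a_i, b_i, c_i with 0 < b_i + c_i < 1, for all i ∈ I and all x, y ∈ X, min{ H_i(Fx,Fy)^r, d_i(x,Fx)·d_i(y,Fy)^{r-1}, d_i(y,Fy)^r } + a_i·min{ d_i(x,Fy), d_i(y,Fx) } ≤ [ b_i·d_i(x,Fx) + c_i·d_i(x,y) ]·d_i(y,Fy)^{r-1}. Let {x_n} be a sequence with x_{n+1} ∈ F x_n and d_i(x_n, x_{n+1}) = d_i(x_n, F x_n) for all n and all i ∈ I, and suppose d_i(x_n, F x_n) > 0 for all n and i. Then for every i ∈ I and every n ≥ 1, d_i(x_n, x_{n+1}) ≤ k_i · d_i(x_{n-1}, x_n), where k_i = b_i + c_i; consequently d_i(x_n, x_{n+1})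 ≤ k_i^n · d_i(x_0, x_1) for all n. -/
open Filter Set

/-- Distance from a point to a set, relative to a pseudometric `d`. -/
noncomputable def pdist {X : Type*} (d : X → X → ℝ) (x : X) (A : Set X) : ℝ :=
  sInf ((d x) '' A)

/-- Hausdorff pseudometric induced by a pseudometric `d`. -/
noncomputable def hdist {X : Type*} (d : X → X → ℝ) (A B : Set X) : ℝ :=
  max (sSup ((fun a => pdist d a B) '' A)) (sSup ((fun b => pdist d b A) '' B))

/-- A set is `p*`-bounded for the family of pseudometrics `d` if the distances between
its points are uniformly bounded over all indices. -/
def pstarBounded {X I : Type*} (d : I → X → X → ℝ) (A : Set X) : Prop :=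
  ∃ M : ℝ, ∀ i : I, ∀ x ∈ A, ∀ y ∈ A, d i x y ≤ M

/-- The key contraction estimate in the proof of Theorem 1: along an orbit
`x_{n+1} ∈ F x_n` realizing the distances `d_i(x_n, F x_n)`, one has
`d_i(x_n, x_{n+1}) ≤ k_i · d_i(x_{n-1}, x_n)` with `k_i = b_i + c_i`, and hence
`d_i(x_n, x_{n+1}) ≤ k_i^n · d_i(x_0, x_1)`. -/
theorem orbit_contraction_estimate
    {X I : Type*}
    (d : I → X → X → ℝ)
    (hrefl : ∀ i x, d i x x = 0)
    (hsymm : ∀ i x y, d i x y = d i y x)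
    (htri : ∀ i x y z, d i x z ≤ d i x y + d i y z)
    (F : X → Set X)
    (hne : ∀ x, (F x).Nonempty)
    (hbd : ∀ x, pstarBounded d (F x))
    (r : ℕ) (hr : 1 ≤ r)
    (a b c : I → ℝ)
    (hbc : ∀ i, 0 < b i + c i ∧ b i + c i < 1)
    (hcontr : ∀ i : I, ∀ x y : X,
      min (min ((hdist (d i) (F x) (F y)) ^ r)
            (pdist (d i) x (F x) * (pdist (d i) y (F y)) ^ (r - 1)))
          ((pdist (d i) y (F y)) ^ r)
        + a i * min (pdist (d i) x (F y)) (pdist (d i) y (F x))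
      ≤ (b i * pdist (d i) x (F x) + c i * d i x y) *
          (pdist (d i) y (F y)) ^ (r - 1))
    (x : ℕ → X)
    (horbit : ∀ n : ℕ, x (n + 1) ∈ F (x n))
    (hmin : ∀ i : I, ∀ n : ℕ, d i (x n) (x (n + 1)) = pdist (d i) (x n) (F (x n)))
    (hpos : ∀ i : I, ∀ n : ℕ, 0 < pdist (d i) (x n) (F (x n))) :
    (∀ i : I, ∀ n : ℕ, 1 ≤ n →
      d i (x n) (x (n + 1)) ≤ (b i + c i) * d i (x (n - 1)) (x n)) ∧
    (∀ i : I, ∀ n : ℕ,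
      d i (x n) (x (n + 1)) ≤ (b i + c i) ^ n * d i (x 0) (x 1)) := by
  have hd0 : ∀ i x y, 0 ≤ d i x y := by
    intro i x y
    have h1 := htri i x y x
    have h2 := hrefl i x
    have h3 := hsymm i x y
    linarith
  have hpd_nonneg : ∀ i (z : X) (A : Set X), 0 ≤ pdist (d i) z A := by
    intro i z A
    exact Real.sInf_nonneg (by rintro _ ⟨a, -, rfl⟩; exact hd0 i z a)
  have hpd_le : ∀ i (z : X) (A : Set X) (a : X), a ∈ A → pdist (d i) z A ≤ d i z a := by
    intro i z A a ha
    exact csInf_le ⟨0, by rintro _ ⟨a', -, rfl⟩; exact hd0 i z a'⟩ ⟨a, ha, rfl⟩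
  have key : ∀ i n, d i (x (n+1)) (x (n+2)) ≤ (b i + c i) * d i (x n) (x (n+1)) := by
    intro i n
    obtain ⟨s, rfl⟩ : ∃ s, r = s + 1 := ⟨r - 1, (Nat.succ_pred_eq_of_pos hr).symm⟩
    set A := d i (x n) (x (n+1)) with hAdef
    set D := d i (x (n+1)) (x (n+2)) with hDdef
    have hA : pdist (d i) (x n) (F (x n)) = A := (hmin i n).symm
    have hD : pdist (d i) (x (n+1)) (F (x (n+1))) = D := (hmin i (n+1)).symm
    have hApos : 0 < A := hA ▸ hpos i n
    have hDpos : 0 < D := hD ▸ hpos i (n+1)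
    have hz : pdist (d i) (x (n+1)) (F (x n)) = 0 := by
      refine le_antisymm ?_ (hpd_nonneg _ _ _)
      have := hpd_le i (x (n+1)) (F (x n)) (x (n+1)) (horbit n)
      simpa [hrefl] using this
    have hDH : D ≤ hdist (d i) (F (x n)) (F (x (n+1))) := by
      have hmem : pdist (d i) (x (n+1)) (F (x (n+1))) ∈
          (fun a => pdist (d i) a (F (x (n+1)))) '' (F (x n)) := ⟨x (n+1), horbit n, rfl⟩
      obtain ⟨M, hM⟩ := hbd (x n)
      obtain ⟨w0, hw0⟩ := hne (x (n+1))
      have hbdd : BddAbove ((fun a => pdist (d i) a (F (x (n+1)))) '' (F (x n))) := by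
        refine ⟨M + d i (x (n+1)) w0, ?_⟩
        rintro _ ⟨a', ha', rfl⟩
        calc pdist (d i) a' (F (x (n+1))) ≤ d i a' w0 := hpd_le _ _ _ _ hw0
          _ ≤ d i a' (x (n+1)) + d i (x (n+1)) w0 := htri _ _ _ _
          _ ≤ M + d i (x (n+1)) w0 := by
              have := hM i a' ha' (x (n+1)) (horbit n); linarith
      calc D = pdist (d i) (x (n+1)) (F (x (n+1))) := hD.symm
        _ ≤ sSup ((fun a => pdist (d i) a (F (x (n+1)))) '' (F (x n))) := le_csSup hbdd hmem
        _ ≤ hdist (d i) (F (x n)) (F (x (n+1))) := le_max_left _ _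
    have hc := hcontr i (x n) (x (n+1))
    rw [hA, hD, hz] at hc
    simp only [Nat.add_sub_cancel] at hc
    have hzero : min (pdist (d i) (x n) (F (x (n+1)))) 0 = 0 :=
      min_eq_right (hpd_nonneg _ _ _)
    rw [hzero, mul_zero, add_zero] at hc
    have hDr : D ^ (s+1) ≤ hdist (d i) (F (x n)) (F (x (n+1))) ^ (s+1) :=
      pow_le_pow_left₀ hDpos.le hDH _
    have hmin' : min (A * D ^ s) (D ^ (s+1)) ≤ (b i * A + c i * A) * D ^ s := by
      refine le_trans ?_ hc
      refine le_min (le_min ((min_le_right _ _).trans hDr) (min_le_left _ _)) (min_le_right _ _)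
    have hDs : 0 < D ^ s := pow_pos hDpos s
    rcases le_total (A * D ^ s) (D ^ (s+1)) with h | h
    · exfalso
      rw [min_eq_left h] at hmin'
      nlinarith [(hbc i).2, mul_pos hApos hDs]
    · rw [min_eq_right h, pow_succ] at hmin'
      have : D ^ s * D ≤ D ^ s * ((b i + c i) * A) := by nlinarith
      have := le_of_mul_le_mul_left this hDs
      linarith
  constructor
  · intro i n hn
    obtain ⟨m, rfl⟩ : ∃ m, n = m + 1 := ⟨n - 1, (Nat.succ_pred_eq_of_pos hn).symm⟩
    simpa using key i m
  · intro i n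
    induction n with
    | zero => simp
    | succ m ih =>
        have hk : 0 < b i + c i := (hbc i).1
        calc d i (x (m+1)) (x (m+2)) ≤ (b i + c i) * d i (x m) (x (m+1)) := key i m
          _ ≤ (b i + c i) * ((b i + c i) ^ m * d i (x 0) (x 1)) := by
              exact mul_le_mul_of_nonneg_left ih hk.le
          _ = (b i + c i) ^ (m+1) * d i (x 0) (x 1) := by ring
end

section
/- Let (X, d) be a metric space and let T : X → X be a T-orbitally continuous mapping such that X is T-orbitally complete (every Cauchy subsequence of an orbit of T converges in X). Assume that for real numbers b, c with 0 < b + c < 1, for all x, y ∈ X: min{ d(Tx,Ty), d(x,Tx), d(y,Ty) } − min{ d(x,Ty), d(y,Tx) } ≤ b·d(x,Tx) + c·d(x,y). Then for each x ∈ X the sequence of iterates {T^n x} converges to a fixed point of T. -/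
open Filter

/-- Metric space specialization of Corollary 4 (Corollary 1 of Dhage): for a
`T`-orbitally continuous self-map of a `T`-orbitally complete metric space
satisfying the condition, the iterates `{T^n x}` converge to a fixed point. -/
theorem metric_iterates_converge_to_fixed_point
    {X : Type*} [MetricSpace X]
    (T : X → X)
    -- `T` is orbitally continuous:
    (hTcont : ∀ (x u : X) (n : ℕ → ℕ), StrictMono n →
      Tendsto (fun j => T^[n j] x) Filter.atTop (nhds u) →
      Tendsto (fun j => T (T^[n j] x)) Filter.atTop (nhds (T u)))
    -- `X` is `T`-orbitally complete: every Cauchy subsequence of an orbit converges: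
    (horb : ∀ (x : X) (s : ℕ → ℕ), StrictMono s →
      CauchySeq (fun j => T^[s j] x) →
      ∃ z : X, Tendsto (fun j => T^[s j] x) Filter.atTop (nhds z))
    (b c : ℝ)
    (hbc0 : 0 < b + c) (hbc1 : b + c < 1)
    (hcontr : ∀ x y : X,
      min (min (dist (T x) (T y)) (dist x (T x))) (dist y (T y))
        - min (dist x (T y)) (dist y (T x))
      ≤ b * dist x (T x) + c * dist x y) :
    ∀ x : X, ∃ z : X, T z = z ∧
      Tendsto (fun n => T^[n] x) Filter.atTop (nhds z) := by
  intro x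
  have key : ∀ y : X, dist (T y) (T (T y)) ≤ (b + c) * dist y (T y) := by
    intro y
    have h := hcontr y (T y)
    rw [dist_self, min_eq_right dist_nonneg, sub_zero] at h
    rcases le_total (dist (T y) (T (T y))) (dist y (T y)) with hle | hle
    · rw [min_eq_left hle, min_self] at h
      nlinarith
    · rw [min_eq_right hle, min_eq_left hle] at h
      have hd0 : dist y (T y) = 0 := by nlinarith [dist_nonneg (x := y) (y := T y)]
      have hy : T y = y := (dist_eq_zero.mp hd0).symm
      rw [hy, hd0]
      simp
  -- geometric bound on consecutive distances
  have bound : ∀ n : ℕ, dist (T^[n] x) (T^[n + 1] x) ≤ dist x (T x) * (b + c) ^ n := by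
    intro n
    induction n with
    | zero => simp [Function.iterate_succ_apply']
    | succ n ih =>
      have h := key (T^[n] x)
      rw [← Function.iterate_succ_apply' T n x] at h
      rw [← Function.iterate_succ_apply' T (n + 1) x] at h
      calc dist (T^[n + 1] x) (T^[n + 1 + 1] x)
          ≤ (b + c) * dist (T^[n] x) (T^[n + 1] x) := h
        _ ≤ (b + c) * (dist x (T x) * (b + c) ^ n) :=
            mul_le_mul_of_nonneg_left ih (le_of_lt hbc0)
        _ = dist x (T x) * (b + c) ^ (n + 1) := by ring
  have hcauchy : CauchySeq (fun n => T^[n] x) :=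
    cauchySeq_of_le_geometric (b + c) (dist x (T x)) hbc1 bound
  obtain ⟨z, hz⟩ := horb x id strictMono_id hcauchy
  refine ⟨z, ?_, hz⟩
  have h1 : Tendsto (fun j => T (T^[j] x)) Filter.atTop (nhds (T z)) :=
    hTcont x z id strictMono_id hz
  have h2 : Tendsto (fun j => T (T^[j] x)) Filter.atTop (nhds z) := by
    have := hz.comp (tendsto_add_atTop_nat 1)
    simpa [Function.comp_def, Function.iterate_succ_apply'] using this
  exact tendsto_nhds_unique h1 h2
end
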